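/- Fix q ∈ V and a function ev assigning to each vertex v ∈ V a dart ev(v) of G with head v. Let L = {y_e − y_{ev(e₊)} : e a dart of G with e ≠ ev(e₊)} and L^{(q)} = L ∪ {y_{ev(q)}}. Then every list without repetitions whose set of entries is exactly L^{(q)} is a regular sequence on the S-module S/O_G^q. (In particular L^{(q)} is a linear system of parameters for S/O_G^q.) -/

import Mathlib

open Finset MvPolynomial

set_option linter.unusedSectionVars false
set_option linter.unusedVariables false

/-- The graphic oriented matroid ideal `O_G^q`: the ideal generated by the cut monomials
`∏_{e ∈ E(Aᶜ,A)} y_e` over all proper subsets `A ⊊ V` with `q ∈ A`.  A dart `e` has head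
`e₊ = e.fst` and tail `e₋ = e.snd`. -/
noncomputable def orientedMatroidIdeal {V : Type} [Fintype V] [DecidableEq V]
    (G : SimpleGraph V) [DecidableRel G.Adj] (K : Type) [Field K] (q : V) :
    Ideal (MvPolynomial G.Dart K) :=
  Ideal.span {p | ∃ A : Finset V, A ≠ Finset.univ ∧ q ∈ A ∧
    p = ∏ e ∈ univ.filter (fun e : G.Dart => e.fst ∈ Aᶜ ∧ e.snd ∈ A), X e}

namespace Stmt11Aux

variable {V : Type} [Fintype V] [DecidableEq V]

section Defs

variable (G : SimpleGraph V) [DecidableRel G.Adj] (K : Type) [Field K]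
  (q : V) (ev : V → G.Dart)

/-- The set of darts with head outside `A` and tail in `A`. -/
def cutSet (A : Finset V) : Finset G.Dart :=
  univ.filter (fun e : G.Dart => e.fst ∈ Aᶜ ∧ e.snd ∈ A)

/-- Identification map collapsing darts in `D` to the chosen dart with the same head. -/
def cmap (D : Finset G.Dart) (e : G.Dart) : G.Dart :=
  if e ∈ D then ev e.fst else e

/-- Exponent vector of the image of the cut monomial of `A` under the identification. -/
noncomputable def gvec (D : Finset G.Dart) (A : Finset V) : G.Dart →₀ ℕ :=
  ∑ f ∈ cutSet G A, Finsupp.single (cmap G ev D f) 1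

/-- Exponent vectors generating the monomial ideal at stage `(D, ε)`. -/
noncomputable def genSet (D : Finset G.Dart) (ε : Bool) : Set (G.Dart →₀ ℕ) :=
  {n | ∃ A : Finset V, A ≠ Finset.univ ∧ q ∈ A ∧ n = gvec G ev D A} ∪
    (if ε then {Finsupp.single (ev q) 1} else ∅)

/-- The monomial ideal at stage `(D, ε)`. -/
noncomputable def JJ (D : Finset G.Dart) (ε : Bool) : Ideal (MvPolynomial G.Dart K) :=
  Ideal.span ((fun s => monomial s (1 : K)) '' genSet G q ev D ε)

/-- The full ideal at stage `(D, ε)`. -/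
noncomputable def II (D : Finset G.Dart) (ε : Bool) : Ideal (MvPolynomial G.Dart K) :=
  orientedMatroidIdeal G K q ⊔
    Ideal.span ((fun e => X e - X (ev e.fst)) '' (D : Set G.Dart)) ⊔
    (if ε then Ideal.span {(X (ev q) : MvPolynomial G.Dart K)} else ⊥)

end Defs

variable {G : SimpleGraph V} [DecidableRel G.Adj] {K : Type} [Field K]
  {q : V} {ev : V → G.Dart} {D : Finset G.Dart} {ε : Bool}

section Basic

lemma ev_not_mem (hev : ∀ v, (ev v).fst = v) (hD : ∀ d ∈ D, d ≠ ev d.fst) (v : V) :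
    ev v ∉ D := by
  intro h
  exact hD _ h (by rw [hev])

lemma cmap_ev (hev : ∀ v, (ev v).fst = v) (hD : ∀ d ∈ D, d ≠ ev d.fst) (v : V) :
    cmap G ev D (ev v) = ev v :=
  if_neg (ev_not_mem hev hD v)

lemma cmap_fst (hev : ∀ v, (ev v).fst = v) (f : G.Dart) :
    (cmap G ev D f).fst = f.fst := by
  unfold cmap
  split
  · rw [hev]
  · rfl

lemma cmap_eq_self {e : G.Dart} (he : e ∉ D) : cmap G ev D e = e := if_neg he

lemma cmap_eq_iff (hev : ∀ v, (ev v).fst = v) {e : G.Dart} (he2 : e ≠ ev e.fst) {f : G.Dart}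
    (h : cmap G ev D f = e) : f = e := by
  unfold cmap at h
  split at h
  · exfalso
    apply he2
    rw [← h, hev]
  · exact h

end Basic

lemma gvec_apply (D : Finset G.Dart) (A : Finset V) (d : G.Dart) :
    gvec G ev D A d = ((cutSet G A).filter (fun f => cmap G ev D f = d)).card := by
  classical
  rw [gvec, Finsupp.finset_sum_apply, Finset.card_filter]
  refine Finset.sum_congr rfl fun f _ => ?_
  rw [Finsupp.single_apply]

lemma mem_genSet_iff {g : G.Dart →₀ ℕ} :
    g ∈ genSet G q ev D ε ↔
      (∃ A : Finset V, A ≠ Finset.univ ∧ q ∈ A ∧ g = gvec G ev D A) ∨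
        (ε = true ∧ g = Finsupp.single (ev q) 1) := by
  cases ε <;> simp [genSet, or_comm]

/-- If `g ≤ n + eₓ` but `g ≰ n`, then `g` exceeds `n` precisely at `x`. -/
lemma le_add_single {g n : G.Dart →₀ ℕ} {x : G.Dart}
    (h : g ≤ n + Finsupp.single x 1) (h2 : ¬ g ≤ n) :
    (∀ d, d ≠ x → g d ≤ n d) ∧ g x = n x + 1 := by
  have h' : ∀ d, g d ≤ n d + Finsupp.single x 1 d := fun d => by
    simpa using (Finsupp.le_def.mp h) d
  have hother : ∀ d, d ≠ x → g d ≤ n d := by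
    intro d hd
    have := h' d
    rwa [Finsupp.single_apply, if_neg (fun hh => hd hh.symm), add_zero] at this
  refine ⟨hother, ?_⟩
  have hx : ¬ g x ≤ n x := by
    intro hx
    apply h2
    rw [Finsupp.le_def]
    intro d
    by_cases hd : d = x
    · rwa [hd]
    · exact hother d hd
  have := h' x
  rw [Finsupp.single_apply, if_pos rfl] at this
  omega


lemma mem_cutSet {A : Finset V} {f : G.Dart} :
    f ∈ cutSet G A ↔ f.fst ∉ A ∧ f.snd ∈ A := by
  simp [cutSet]

section Comb

variable (hev : ∀ v, (ev v).fst = v) (hD : ∀ d ∈ D, d ≠ ev d.fst)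
include hev hD

/-- Extraction from the `z`-side divisibility. -/
lemma zside {e : G.Dart} (he1 : e ∉ D) (he2 : e ≠ ev e.fst) {n : G.Dart →₀ ℕ}
    (hn : ¬ ∃ g ∈ genSet G q ev D ε, g ≤ n)
    (h : ∃ g ∈ genSet G q ev D ε, g ≤ n + Finsupp.single e 1) :
    ∃ A : Finset V, A ≠ Finset.univ ∧ q ∈ A ∧ e ∈ cutSet G A ∧
      (∀ d, d ≠ e → gvec G ev D A d ≤ n d) ∧ n e = 0 := by
  obtain ⟨g, hg, hle⟩ := h
  have hgn : ¬ g ≤ n := fun hh => hn ⟨g, hg, hh⟩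
  obtain ⟨hother, hx⟩ := le_add_single hle hgn
  rcases mem_genSet_iff.mp hg with ⟨A, hA, hqA, rfl⟩ | ⟨_, rfl⟩
  · have hcard : ((cutSet G A).filter (fun f => cmap G ev D f = e)).card = n e + 1 := by
      rw [← gvec_apply]; exact hx
    have hsub : (cutSet G A).filter (fun f => cmap G ev D f = e) ⊆ {e} := by
      intro f hf
      rw [Finset.mem_filter] at hf
      rw [Finset.mem_singleton]
      exact cmap_eq_iff hev he2 hf.2
    have hle1 : n e + 1 ≤ 1 := by
      rw [← hcard]
      exact (Finset.card_le_card hsub).trans (by simp)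
    have hne : n e = 0 := by omega
    have hecut : e ∈ cutSet G A := by
      have hne2 : ((cutSet G A).filter (fun f => cmap G ev D f = e)).Nonempty := by
        rw [← Finset.card_pos, hcard]; omega
      obtain ⟨f, hf⟩ := hne2
      have hf' := Finset.mem_filter.mp hf
      exact (cmap_eq_iff hev he2 hf'.2) ▸ hf'.1
    exact ⟨A, hA, hqA, hecut, fun d hd => hother d hd, hne⟩
  · exfalso
    have h2 : ev q = e := by
      by_contra hne'
      rw [Finsupp.single_apply, if_neg hne'] at hx; omega
    apply he2
    rw [← h2, hev, h2]

/-- Colon by the variable `X (ev q)` at the exponent level. -/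
lemma evq_step {n : G.Dart →₀ ℕ}
    (h : ∃ g ∈ genSet G q ev D false, g ≤ n + Finsupp.single (ev q) 1) :
    ∃ g ∈ genSet G q ev D false, g ≤ n := by
  obtain ⟨g, hg, hle⟩ := h
  refine ⟨g, hg, ?_⟩
  by_contra hgn
  obtain ⟨hother, hx⟩ := le_add_single hle hgn
  rcases mem_genSet_iff.mp hg with ⟨A, hA, hqA, rfl⟩ | ⟨hfalse, _⟩
  · have hzero : gvec G ev D A (ev q) = 0 := by
      rw [gvec_apply, Finset.card_eq_zero, Finset.filter_eq_empty_iff]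
      intro f hf hc
      have h1 : f.fst = q := by rw [← cmap_fst hev f, hc, hev]
      have h2 := (mem_cutSet.mp hf).1
      rw [h1] at h2
      exact h2 hqA
    omega
  · exact absurd hfalse (by simp)

/-- The key combinatorial lemma: no monomial outside the ideal is sent into it by
both `X e` and `X (ev e.fst)`. -/
lemma no_bad {e : G.Dart} (he1 : e ∉ D) (he2 : e ≠ ev e.fst) {n : G.Dart →₀ ℕ}
    (hne : n e = 0)
    (hn : ¬ ∃ g ∈ genSet G q ev D ε, g ≤ n)
    (hz : ∃ g ∈ genSet G q ev D ε, g ≤ n + Finsupp.single e 1)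
    (ht : ∃ g ∈ genSet G q ev D ε, g ≤ n + Finsupp.single (ev e.fst) 1) : False := by
  obtain ⟨A, hA, hqA, heA, hAle, _⟩ := zside hev hD he1 he2 hn hz
  have hwA : e.fst ∉ A := (mem_cutSet.mp heA).1
  obtain ⟨g, hg, hle⟩ := ht
  have hgn : ¬ g ≤ n := fun hh => hn ⟨g, hg, hh⟩
  obtain ⟨hother, hx⟩ := le_add_single hle hgn
  rcases mem_genSet_iff.mp hg with ⟨B, hB, hqB, rfl⟩ | ⟨_, rfl⟩
  swap
  · have h2 : ev q = ev e.fst := by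
      by_contra hne'
      rw [Finsupp.single_apply, if_neg hne'] at hx; omega
    have h3 : q = e.fst := by rw [← hev q, h2, hev]
    exact hwA (h3 ▸ hqA)
  · have hwB : e.fst ∉ B := by
      have hpos : 0 < gvec G ev D B (ev e.fst) := by omega
      rw [gvec_apply, Finset.card_pos] at hpos
      obtain ⟨f, hf⟩ := hpos
      rw [Finset.mem_filter] at hf
      have h1 : f.fst = e.fst := by rw [← cmap_fst hev f, hf.2, hev]
      have h2 := (mem_cutSet.mp hf.1).1
      rwa [h1] at h2
    have hsB : e.snd ∉ B := by
      intro hsnd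
      have hecutB : e ∈ cutSet G B := mem_cutSet.mpr ⟨hwB, hsnd⟩
      have h1 : 0 < gvec G ev D B e := by
        rw [gvec_apply, Finset.card_pos]
        exact ⟨e, Finset.mem_filter.mpr ⟨hecutB, cmap_eq_self he1⟩⟩
      have h2 : gvec G ev D B e ≤ n e := hother e he2
      omega
    apply hn
    refine ⟨gvec G ev D (A ∩ B),
      mem_genSet_iff.mpr (Or.inl ⟨A ∩ B, ?_, Finset.mem_inter.mpr ⟨hqA, hqB⟩, rfl⟩), ?_⟩
    · intro hC
      exact hwA (Finset.mem_inter.mp (hC ▸ Finset.mem_univ e.fst)).1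
    · rw [Finsupp.le_def]
      intro d
      rcases Finset.eq_empty_or_nonempty
          ((cutSet G (A ∩ B)).filter (fun f => cmap G ev D f = d)) with hemp | ⟨f₀, hf₀⟩
      · rw [gvec_apply, hemp]; simp
      · rw [Finset.mem_filter] at hf₀
        have hdfst : d.fst = f₀.fst := by rw [← hf₀.2, cmap_fst hev]
        have hf₀C := mem_cutSet.mp hf₀.1
        by_cases hvA : f₀.fst ∈ A
        · -- use the B-side bound
          have hvB : f₀.fst ∉ B := by
            intro hvB
            exact hf₀C.1 (Finset.mem_inter.mpr ⟨hvA, hvB⟩)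
          have hsubB : (cutSet G (A ∩ B)).filter (fun f => cmap G ev D f = d) ⊆
              (cutSet G B).filter (fun f => cmap G ev D f = d) := by
            intro f hf
            rw [Finset.mem_filter] at hf ⊢
            refine ⟨?_, hf.2⟩
            have h1 : f.fst = f₀.fst := by
              rw [← cmap_fst hev f, hf.2, hdfst]
            refine mem_cutSet.mpr ⟨by rw [h1]; exact hvB, ?_⟩
            exact (Finset.mem_inter.mp (mem_cutSet.mp hf.1).2).2
          have hdne : d ≠ ev e.fst := by
            intro hh
            apply hwA
            have h4 : d.fst = e.fst := by rw [hh, hev]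
            rw [← h4, hdfst]
            exact hvA
          calc gvec G ev D (A ∩ B) d ≤ gvec G ev D B d := by
                rw [gvec_apply, gvec_apply]; exact Finset.card_le_card hsubB
            _ ≤ n d := hother d hdne
        · -- use the A-side bound
          have hsubA : (cutSet G (A ∩ B)).filter (fun f => cmap G ev D f = d) ⊆
              (cutSet G A).filter (fun f => cmap G ev D f = d) := by
            intro f hf
            rw [Finset.mem_filter] at hf ⊢
            refine ⟨?_, hf.2⟩
            have h1 : f.fst = f₀.fst := by
              rw [← cmap_fst hev f, hf.2, hdfst]
            refine mem_cutSet.mpr ⟨by rw [h1]; exact hvA, ?_⟩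
            exact (Finset.mem_inter.mp (mem_cutSet.mp hf.1).2).1
          have hdne : d ≠ e := by
            intro hh
            subst hh
            have hfe : f₀ = d := cmap_eq_iff hev he2 hf₀.2
            apply hsB
            have := (Finset.mem_inter.mp (mem_cutSet.mp (hfe ▸ hf₀.1)).2).2
            exact this
          calc gvec G ev D (A ∩ B) d ≤ gvec G ev D A d := by
                rw [gvec_apply, gvec_apply]; exact Finset.card_le_card hsubA
            _ ≤ n d := hAle d hdne

end Comb


section Poly

/-- Colon by a variable for a monomial ideal. -/
lemma var_colon {gens : Set (G.Dart →₀ ℕ)} {u : G.Dart}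
    (h1 : ∀ n, (∃ g ∈ gens, g ≤ n + Finsupp.single u 1) → ∃ g ∈ gens, g ≤ n)
    (f : MvPolynomial G.Dart K)
    (hf : X u * f ∈ Ideal.span ((fun s => monomial s (1 : K)) '' gens)) :
    f ∈ Ideal.span ((fun s => monomial s (1 : K)) '' gens) := by
  classical
  rw [mem_ideal_span_monomial_image] at hf ⊢
  intro m hm
  apply h1
  apply hf
  rw [mem_support_iff] at hm ⊢
  rw [coeff_X_mul', if_pos, add_tsub_cancel_right]
  · exact hm
  · rw [Finsupp.mem_support_iff, Finsupp.add_apply, Finsupp.single_apply, if_pos rfl]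
    omega

/-- Colon by a difference of two variables for a monomial ideal satisfying the
two combinatorial conditions. -/
lemma diff_colon {gens : Set (G.Dart →₀ ℕ)} {e t : G.Dart} (het : e ≠ t)
    (hz : ∀ n : G.Dart →₀ ℕ, ¬(∃ g ∈ gens, g ≤ n) →
      (∃ g ∈ gens, g ≤ n + Finsupp.single e 1) → n e = 0)
    (hzt : ∀ n : G.Dart →₀ ℕ, n e = 0 → ¬(∃ g ∈ gens, g ≤ n) →
      (∃ g ∈ gens, g ≤ n + Finsupp.single e 1) →
      (∃ g ∈ gens, g ≤ n + Finsupp.single t 1) → False)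
    (f : MvPolynomial G.Dart K)
    (hf : (X e - X t) * f ∈ Ideal.span ((fun s => monomial s (1 : K)) '' gens)) :
    f ∈ Ideal.span ((fun s => monomial s (1 : K)) '' gens) := by
  classical
  rw [mem_ideal_span_monomial_image] at hf ⊢
  have star : ∀ n : G.Dart →₀ ℕ, ¬(∃ g ∈ gens, g ≤ n) →
      (if e ∈ n.support then coeff (n - Finsupp.single e 1) f else 0) =
      (if t ∈ n.support then coeff (n - Finsupp.single t 1) f else 0) := by
    intro n hn
    have h0 : coeff n ((X e - X t) * f) = 0 := by
      by_contra h
      exact hn (hf n (mem_support_iff.mpr h))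
    rw [sub_mul, coeff_sub, sub_eq_zero, coeff_X_mul', coeff_X_mul'] at h0
    exact h0
  have key : ∀ k : ℕ, ∀ m : G.Dart →₀ ℕ, m t = k → coeff m f ≠ 0 → ∃ g ∈ gens, g ≤ m := by
    intro k
    induction k using Nat.strong_induction_on with
    | _ k ih =>
      intro m hmt hc
      by_contra hm
      have hJe : ∃ g ∈ gens, g ≤ m + Finsupp.single e 1 := by
        by_contra hB
        have hstar := star _ hB
        have he_mem : e ∈ (m + Finsupp.single e 1).support := by
          rw [Finsupp.mem_support_iff, Finsupp.add_apply, Finsupp.single_apply, if_pos rfl]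
          omega
        rw [if_pos he_mem, add_tsub_cancel_right] at hstar
        by_cases hts : t ∈ (m + Finsupp.single e 1).support
        · rw [if_pos hts] at hstar
          set m' := m + Finsupp.single e 1 - Finsupp.single t 1 with hm'
          have hc' : coeff m' f ≠ 0 := by rw [← hstar]; exact hc
          have hmt1 : 0 < m t := by
            rw [Finsupp.mem_support_iff, Finsupp.add_apply, Finsupp.single_apply,
              if_neg het, add_zero] at hts
            omega
          have hm't : m' t = m t - 1 := by
            rw [hm', Finsupp.tsub_apply, Finsupp.add_apply, Finsupp.single_apply,
              Finsupp.single_apply, if_neg het, if_pos rfl, add_zero]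
          obtain ⟨g, hg, hgle⟩ := ih (m t - 1) (by omega) m' (by omega) hc'
          exact hB ⟨g, hg, hgle.trans tsub_le_self⟩
        · rw [if_neg hts] at hstar
          exact hc hstar
      have hme : m e = 0 := hz m hm hJe
      have hJt : ¬ ∃ g ∈ gens, g ≤ m + Finsupp.single t 1 := fun h => hzt m hme hm hJe h
      have hstar := star _ hJt
      have he_mem : e ∉ (m + Finsupp.single t 1).support := by
        rw [Finsupp.mem_support_iff, Finsupp.add_apply, Finsupp.single_apply,
          if_neg (fun hh => het hh.symm), add_zero, hme]
        simp
      have ht_mem : t ∈ (m + Finsupp.single t 1).support := by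
        rw [Finsupp.mem_support_iff, Finsupp.add_apply, Finsupp.single_apply, if_pos rfl]
        omega
      rw [if_neg he_mem, if_pos ht_mem, add_tsub_cancel_right] at hstar
      exact hc hstar.symm
  intro m hm
  exact key (m t) m rfl (mem_support_iff.mp hm)

end Poly


section Bridge

lemma prod_X_rename (c : G.Dart → G.Dart) (s : Finset G.Dart) :
    (rename c) (∏ e ∈ s, (X e : MvPolynomial G.Dart K)) =
      monomial (∑ e ∈ s, Finsupp.single (c e) 1) (1 : K) := by
  classical
  induction s using Finset.induction_on with
  | empty => simp [monomial_zero']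
  | @insert a s ha ih =>
    rw [Finset.prod_insert ha, map_mul, rename_X, ih, Finset.sum_insert ha,
      ← pow_one (X (c a) : MvPolynomial G.Dart K), X_pow_eq_monomial, monomial_mul, one_mul]

lemma sub_rename_mem (f : MvPolynomial G.Dart K) :
    f - rename (cmap G ev D) f ∈
      Ideal.span ((fun e => X e - X (ev e.fst)) '' (D : Set G.Dart)) := by
  induction f using MvPolynomial.induction_on with
  | C a => simp
  | add p r hp hr =>
    have hkey : (p + r) - rename (cmap G ev D) (p + r) =
        (p - rename (cmap G ev D) p) + (r - rename (cmap G ev D) r) := by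
      rw [map_add]; ring
    rw [hkey]; exact add_mem hp hr
  | mul_X p n hp =>
    have hkey : p * X n - rename (cmap G ev D) (p * X n) =
        (p - rename (cmap G ev D) p) * X n +
          rename (cmap G ev D) p * (X n - X (cmap G ev D n)) := by
      rw [map_mul, rename_X]; ring
    rw [hkey]
    refine add_mem (Ideal.mul_mem_right _ _ hp) (Ideal.mul_mem_left _ _ ?_)
    by_cases hn : n ∈ D
    · have h1 : cmap G ev D n = ev n.fst := if_pos hn
      rw [h1]
      exact Ideal.subset_span ⟨n, Finset.mem_coe.mpr hn, rfl⟩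
    · rw [cmap_eq_self hn]
      simp

variable (hev : ∀ v, (ev v).fst = v) (hD : ∀ d ∈ D, d ≠ ev d.fst)
include hev hD

lemma mem_II_iff (f : MvPolynomial G.Dart K) :
    f ∈ II G K q ev D ε ↔ rename (cmap G ev D) f ∈ JJ G K q ev D ε := by
  constructor
  · intro h
    have hle : Ideal.map (rename (cmap G ev D)) (II G K q ev D ε) ≤ JJ G K q ev D ε := by
      unfold II
      rw [Ideal.map_sup, Ideal.map_sup]
      refine sup_le (sup_le ?_ ?_) ?_
      · rw [orientedMatroidIdeal, Ideal.map_span, Ideal.span_le]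
        rintro p ⟨p₀, ⟨A, hA, hqA, rfl⟩, rfl⟩
        have h1 : rename (cmap G ev D)
            (∏ e ∈ univ.filter (fun e : G.Dart => e.fst ∈ Aᶜ ∧ e.snd ∈ A),
              (X e : MvPolynomial G.Dart K)) = monomial (gvec G ev D A) 1 :=
          prod_X_rename _ _
        rw [SetLike.mem_coe, h1]
        exact Ideal.subset_span ⟨gvec G ev D A,
          mem_genSet_iff.mpr (Or.inl ⟨A, hA, hqA, rfl⟩), rfl⟩
      · rw [Ideal.map_span, Ideal.span_le]
        rintro p ⟨p₀, ⟨eD, heD, rfl⟩, rfl⟩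
        have h1 : cmap G ev D eD = ev eD.fst := if_pos (Finset.mem_coe.mp heD)
        have h2 : cmap G ev D (ev eD.fst) = ev eD.fst := cmap_ev hev hD _
        rw [SetLike.mem_coe, map_sub, rename_X, rename_X, h1, h2, sub_self]
        exact Ideal.zero_mem _
      · cases ε
        · rw [if_neg (by simp : ¬ (false : Bool) = true), Ideal.map_bot]
          exact bot_le
        · rw [if_pos rfl, Ideal.map_span, Set.image_singleton, Ideal.span_le,
            Set.singleton_subset_iff]
          simp only [SetLike.mem_coe]
          rw [rename_X, cmap_ev hev hD]
          have h1 : (X (ev q) : MvPolynomial G.Dart K) =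
              monomial (Finsupp.single (ev q) 1) 1 := by
            rw [← pow_one (X (ev q) : MvPolynomial G.Dart K), X_pow_eq_monomial]
          rw [h1]
          exact Ideal.subset_span ⟨Finsupp.single (ev q) 1,
            mem_genSet_iff.mpr (Or.inr ⟨rfl, rfl⟩), rfl⟩
    exact hle (Ideal.mem_map_of_mem _ h)
  · intro h
    have hdle : Ideal.span ((fun e => X e - X (ev e.fst)) '' (D : Set G.Dart)) ≤
        II G K q ev D ε := le_trans le_sup_right le_sup_left
    have h2 : JJ G K q ev D ε ≤ II G K q ev D ε := by
      rw [JJ, Ideal.span_le]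
      rintro p ⟨g, hg, rfl⟩
      simp only [SetLike.mem_coe]
      rcases mem_genSet_iff.mp hg with ⟨A, hA, hqA, rfl⟩ | ⟨hε, rfl⟩
      · have hmono : monomial (gvec G ev D A) (1 : K) =
            rename (cmap G ev D) (∏ e ∈ cutSet G A, (X e : MvPolynomial G.Dart K)) :=
          (prod_X_rename _ _).symm
        have hOle : orientedMatroidIdeal G K q ≤ II G K q ev D ε :=
          le_trans le_sup_left le_sup_left
        have hcut : (∏ e ∈ cutSet G A, (X e : MvPolynomial G.Dart K)) ∈ II G K q ev D ε :=
          hOle (Ideal.subset_span ⟨A, hA, hqA, rfl⟩)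
        have hd : (∏ e ∈ cutSet G A, (X e : MvPolynomial G.Dart K)) -
            rename (cmap G ev D) (∏ e ∈ cutSet G A, (X e : MvPolynomial G.Dart K)) ∈
            II G K q ev D ε := hdle (sub_rename_mem _)
        have hkey : monomial (gvec G ev D A) (1 : K) =
            (∏ e ∈ cutSet G A, (X e : MvPolynomial G.Dart K)) -
              ((∏ e ∈ cutSet G A, (X e : MvPolynomial G.Dart K)) -
                rename (cmap G ev D) (∏ e ∈ cutSet G A, (X e : MvPolynomial G.Dart K))) := by
          rw [sub_sub_cancel]
          exact hmono
        rw [hkey]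
        exact sub_mem hcut hd
      · subst hε
        have hX : (X (ev q) : MvPolynomial G.Dart K) ∈ II G K q ev D true := by
          unfold II
          rw [if_pos rfl]
          exact Ideal.mem_sup_right (Ideal.subset_span rfl)
        have h1 : monomial (Finsupp.single (ev q) 1) (1 : K) = X (ev q) := by
          rw [← pow_one (X (ev q) : MvPolynomial G.Dart K), X_pow_eq_monomial]
        rw [h1]
        exact hX
    have hkey : f = (f - rename (cmap G ev D) f) + rename (cmap G ev D) f := by ring
    rw [hkey]
    exact add_mem (hdle (sub_rename_mem f)) (h2 h)

end Bridge


section Steps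

variable (hev : ∀ v, (ev v).fst = v) (hD : ∀ d ∈ D, d ≠ ev d.fst)
include hev hD

lemma II_colon_diff {e : G.Dart} (he1 : e ∉ D) (he2 : e ≠ ev e.fst)
    (f : MvPolynomial G.Dart K)
    (hf : (X e - X (ev e.fst)) * f ∈ II G K q ev D ε) : f ∈ II G K q ev D ε := by
  rw [mem_II_iff hev hD] at hf ⊢
  rw [map_mul, map_sub, rename_X, rename_X, cmap_eq_self he1, cmap_ev hev hD] at hf
  unfold JJ at hf ⊢
  refine diff_colon he2 ?_ ?_ _ hf
  · intro n hn hz'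
    obtain ⟨A, -, -, -, -, hh⟩ := zside hev hD he1 he2 hn hz'
    exact hh
  · intro n hne hn hz' ht'
    exact no_bad hev hD he1 he2 hne hn hz' ht'

lemma II_colon_evq (f : MvPolynomial G.Dart K)
    (hf : X (ev q) * f ∈ II G K q ev D false) : f ∈ II G K q ev D false := by
  rw [mem_II_iff hev hD] at hf ⊢
  rw [map_mul, rename_X, cmap_ev hev hD] at hf
  unfold JJ at hf ⊢
  exact var_colon (fun n hn => evq_step hev hD hn) _ hf

lemma II_sup_diff {e : G.Dart} (he1 : e ∉ D) :
    II G K q ev D ε ⊔ Ideal.span {X e - X (ev e.fst)} = II G K q ev (insert e D) ε := by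
  unfold II
  rw [Finset.coe_insert, Set.image_insert_eq, Ideal.span_insert]
  ac_rfl

lemma II_sup_evq :
    II G K q ev D false ⊔ Ideal.span {(X (ev q) : MvPolynomial G.Dart K)} =
      II G K q ev D true := by
  unfold II
  rw [if_neg (by simp : ¬ (false : Bool) = true), if_pos rfl, sup_bot_eq]

lemma exists_cut_dart (hG : G.Connected) {A : Finset V} (hA : A ≠ Finset.univ) (hq : q ∈ A) :
    ∃ f : G.Dart, f.fst ∉ A ∧ f.snd ∈ A := by
  have hv : ∃ v : V, v ∉ A := by
    by_contra h
    push_neg at h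
    exact hA (Finset.eq_univ_iff_forall.mpr h)
  obtain ⟨v, hv⟩ := hv
  obtain ⟨p⟩ := hG.preconnected q v
  clear hA
  suffices H : ∀ (a b : V) (p : G.Walk a b), a ∈ A → b ∉ A →
      ∃ f : G.Dart, f.fst ∉ A ∧ f.snd ∈ A from H q v p hq hv
  intro a b p
  induction p with
  | nil => intro h1 h2; exact absurd h1 h2
  | @cons x y z hadj p ih =>
    intro h1 h2
    by_cases hy : y ∈ A
    · exact ih hy h2
    · exact ⟨⟨(y, x), hadj.symm⟩, hy, h1⟩

lemma II_ne_top (hG : G.Connected) : II G K q ev D ε ≠ ⊤ := by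
  intro htop
  have h1 : (1 : MvPolynomial G.Dart K) ∈ II G K q ev D ε := htop ▸ Submodule.mem_top
  set φ : MvPolynomial G.Dart K →ₐ[K] K := aeval (fun _ => (0 : K)) with hφ
  have hker : II G K q ev D ε ≤ RingHom.ker φ := by
    unfold II
    refine sup_le (sup_le ?_ ?_) ?_
    · rw [orientedMatroidIdeal, Ideal.span_le]
      rintro p ⟨A, hA, hqA, rfl⟩
      obtain ⟨f, hf1, hf2⟩ := exists_cut_dart hev hD hG hA hqA
      have hfmem : f ∈ cutSet G A := mem_cutSet.mpr ⟨hf1, hf2⟩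
      simp only [SetLike.mem_coe, RingHom.mem_ker]
      rw [map_prod]
      refine Finset.prod_eq_zero hfmem ?_
      simp [hφ]
    · rw [Ideal.span_le]
      rintro p ⟨eD, -, rfl⟩
      simp only [SetLike.mem_coe, RingHom.mem_ker, map_sub]
      simp [hφ]
    · split_ifs
      · rw [Ideal.span_le, Set.singleton_subset_iff]
        simp [hφ]
      · exact bot_le
  have h2 := hker h1
  rw [RingHom.mem_ker, map_one] at h2
  exact one_ne_zero h2

end Steps


section ModulePlumbing

open Pointwise

lemma quot_smul_regular {R : Type} [CommRing R] (I : Ideal R) (s : R)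
    (h : ∀ f, s * f ∈ I → f ∈ I) : IsSMulRegular (R ⧸ I) s := by
  intro x y hxy
  obtain ⟨a, rfl⟩ := Ideal.Quotient.mk_surjective x
  obtain ⟨b, rfl⟩ := Ideal.Quotient.mk_surjective y
  have hxy' : Ideal.Quotient.mk I (s * a) = Ideal.Quotient.mk I (s * b) := hxy
  rw [Ideal.Quotient.eq] at hxy' ⊢
  rw [← mul_sub] at hxy'
  exact h _ hxy'

lemma cons_step {R : Type} [CommRing R] (I : Ideal R) (s : R) (l : List R)
    (hreg : ∀ f, s * f ∈ I → f ∈ I)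
    (h2 : RingTheory.Sequence.IsRegular (R ⧸ (I ⊔ Ideal.span {s})) l) :
    RingTheory.Sequence.IsRegular (R ⧸ I) (s :: l) := by
  rw [RingTheory.Sequence.isRegular_cons_iff]
  refine ⟨quot_smul_regular I s hreg, ?_⟩
  have hmap : (s • (⊤ : Submodule R (R ⧸ I))) = Submodule.map I.mkQ (Ideal.span {s}) := by
    have hdef : (s • (⊤ : Submodule R (R ⧸ I))) =
        Submodule.map (DistribMulAction.toLinearMap R (R ⧸ I) s) ⊤ := rfl
    rw [hdef]
    ext x
    simp only [Submodule.mem_map, Submodule.mem_top, true_and]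
    constructor
    · rintro ⟨y, rfl⟩
      obtain ⟨a, rfl⟩ := Ideal.Quotient.mk_surjective y
      exact ⟨s * a, Ideal.mem_span_singleton.mpr ⟨a, rfl⟩, rfl⟩
    · rintro ⟨g, hg, rfl⟩
      obtain ⟨a, rfl⟩ := Ideal.mem_span_singleton.mp hg
      exact ⟨Ideal.Quotient.mk I a, rfl⟩
  let e1 := Submodule.quotEquivOfEq _ _ hmap
  let e2 := Submodule.quotientQuotientEquivQuotientSup (I : Submodule R R) (Ideal.span {s})
  exact (((e1.trans e2)).isRegular_congr l).mpr h2

end ModulePlumbing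

section Inj

lemma diff_inj (hev : ∀ v, (ev v).fst = v) {e e' : G.Dart}
    (he : e ≠ ev e.fst) (he' : e' ≠ ev e'.fst)
    (h : (X e - X (ev e.fst) : MvPolynomial G.Dart K) = X e' - X (ev e'.fst)) : e = e' := by
  classical
  by_contra hne
  have hc := congrArg (coeff (Finsupp.single e 1)) h
  have hev1 : ev e.fst ≠ e := fun hh => he hh.symm
  have hev2 : ev e'.fst ≠ e := by
    intro hh
    apply he
    have : e.fst = e'.fst := by rw [← hh, hev]
    rw [this, hh]
  rw [coeff_sub, coeff_sub, coeff_X', coeff_X', coeff_X', coeff_X'] at hc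
  rw [if_pos rfl, if_neg (fun hh => hev1 (Finsupp.single_left_injective one_ne_zero hh)),
    if_neg (fun hh => (Ne.symm hne) (Finsupp.single_left_injective one_ne_zero hh)),
    if_neg (fun hh => hev2 (Finsupp.single_left_injective one_ne_zero hh))] at hc
  simp at hc

lemma evq_ne_diff (hev : ∀ v, (ev v).fst = v) {e : G.Dart} (he : e ≠ ev e.fst) :
    (X (ev q) : MvPolynomial G.Dart K) ≠ X e - X (ev e.fst) := by
  classical
  intro h
  have hc := congrArg (coeff (Finsupp.single e 1)) h
  have hq1 : ev q ≠ e := by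
    intro hh
    apply he
    have : e.fst = q := by rw [← hh, hev]
    rw [this, hh]
  have hev1 : ev e.fst ≠ e := fun hh => he hh.symm
  rw [coeff_sub, coeff_X', coeff_X', coeff_X'] at hc
  rw [if_neg (fun hh => hq1 (Finsupp.single_left_injective one_ne_zero hh)),
    if_pos rfl,
    if_neg (fun hh => hev1 (Finsupp.single_left_injective one_ne_zero hh))] at hc
  simp at hc

end Inj

section Main

lemma main_ind (hG : G.Connected) (hev : ∀ v, (ev v).fst = v) :
    ∀ (l : List (MvPolynomial G.Dart K)) (D : Finset G.Dart) (ε : Bool),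
      (∀ d ∈ D, d ≠ ev d.fst) → l.Nodup →
      ({p | p ∈ l} =
        {p : MvPolynomial G.Dart K |
          ∃ e : G.Dart, e ∉ D ∧ e ≠ ev e.fst ∧ p = X e - X (ev e.fst)} ∪
          (if ε then ∅ else {X (ev q)})) →
      RingTheory.Sequence.IsRegular (MvPolynomial G.Dart K ⧸ II G K q ev D ε) l := by
  intro l
  induction l with
  | nil =>
    intro D ε hD _ _
    refine ⟨RingTheory.Sequence.IsWeaklyRegular.nil _ _, ?_⟩
    rw [Ideal.ofList_nil, Submodule.bot_smul]
    have hnt : Nontrivial (MvPolynomial G.Dart K ⧸ II G K q ev D ε) :=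
      Ideal.Quotient.nontrivial_iff.mpr (II_ne_top hev hD hG)
    intro h
    obtain ⟨x, y, hxy⟩ := hnt
    apply hxy
    have hx : x ∈ (⊥ : Submodule (MvPolynomial G.Dart K) _) := h ▸ Submodule.mem_top
    have hy : y ∈ (⊥ : Submodule (MvPolynomial G.Dart K) _) := h ▸ Submodule.mem_top
    rw [Submodule.mem_bot] at hx hy
    rw [hx, hy]
  | cons s l ih =>
    intro D ε hD hnodup hset
    have hs : s ∈ ({p : MvPolynomial G.Dart K |
        ∃ e : G.Dart, e ∉ D ∧ e ≠ ev e.fst ∧ p = X e - X (ev e.fst)} ∪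
        (if ε then ∅ else {X (ev q)})) := by
      rw [← hset]; exact List.mem_cons_self
    have hltail : ({p | p ∈ l} : Set (MvPolynomial G.Dart K)) =
        ({p | p ∈ s :: l} : Set (MvPolynomial G.Dart K)) \ {s} := by
      ext p
      simp only [Set.mem_setOf_eq, List.mem_cons, Set.mem_diff, Set.mem_singleton_iff]
      constructor
      · intro hp
        exact ⟨Or.inr hp, fun hh => (List.nodup_cons.mp hnodup).1 (hh ▸ hp)⟩
      · rintro ⟨hp | hp, hne⟩
        · exact absurd hp hne
        · exact hp
    rcases hs with ⟨e, heD, hee, rfl⟩ | hs2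
    · -- difference step
      refine cons_step _ _ _ (fun f hf => II_colon_diff hev hD heD hee f hf) ?_
      rw [II_sup_diff hev hD heD]
      refine ih (insert e D) ε ?_ (List.nodup_cons.mp hnodup).2 ?_
      · intro d hd
        rcases Finset.mem_insert.mp hd with rfl | hd'
        · exact hee
        · exact hD d hd'
      · rw [hltail, hset]
        ext p
        simp only [Set.mem_diff, Set.mem_union, Set.mem_setOf_eq, Set.mem_singleton_iff,
          Finset.mem_insert]
        constructor
        · rintro ⟨⟨e', he'D, he'ne, rfl⟩ | hp, hne⟩
          · left
            refine ⟨e', ?_, he'ne, rfl⟩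
            rintro (rfl | h')
            · exact hne rfl
            · exact he'D h'
          · right; exact hp
        · rintro (⟨e', he'D, he'ne, rfl⟩ | hp)
          · refine ⟨Or.inl ⟨e', fun h' => he'D (Or.inr h'), he'ne, rfl⟩, ?_⟩
            intro h
            exact he'D (Or.inl (diff_inj hev he'ne hee h))
          · refine ⟨Or.inr hp, ?_⟩
            cases ε
            · simp only [if_neg (by simp : ¬ (false : Bool) = true),
                Set.mem_singleton_iff] at hp
              rw [hp]
              exact evq_ne_diff hev hee
            · simp only [if_pos rfl] at hp
              exact absurd hp (Set.notMem_empty p)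
    · -- variable step
      cases ε
      · simp only [if_neg (by simp : ¬ (false : Bool) = true),
          Set.mem_singleton_iff] at hs2
        subst hs2
        refine cons_step _ _ _ (fun f hf => II_colon_evq hev hD f hf) ?_
        rw [II_sup_evq hev hD]
        refine ih D true hD (List.nodup_cons.mp hnodup).2 ?_
        rw [hltail, hset]
        ext p
        simp only [Set.mem_diff, Set.mem_union, Set.mem_setOf_eq, Set.mem_singleton_iff,
          if_pos rfl, if_neg (by simp : ¬ (false : Bool) = true)]
        constructor
        · rintro ⟨⟨e', he'D, he'ne, rfl⟩ | hp, hne⟩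
          · left; exact ⟨e', he'D, he'ne, rfl⟩
          · exact absurd hp hne
        · rintro (⟨e', he'D, he'ne, rfl⟩ | hp)
          · exact ⟨Or.inl ⟨e', he'D, he'ne, rfl⟩, Ne.symm (evq_ne_diff hev he'ne)⟩
          · exact absurd hp (Set.notMem_empty p)
      · simp only [if_pos rfl] at hs2
        exact absurd hs2 (Set.notMem_empty s)

end Main

end Stmt11Aux

theorem stmt11 (V : Type) [Fintype V] [Nonempty V] [DecidableEq V]
    (G : SimpleGraph V) [DecidableRel G.Adj] (hG : G.Connected)
    (K : Type) [Field K] (q : V)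
    (ev : V → G.Dart) (hev : ∀ v, (ev v).fst = v)
    (l : List (MvPolynomial G.Dart K)) (hl : l.Nodup)
    (hset : {p | p ∈ l} =
      {p : MvPolynomial G.Dart K | ∃ e : G.Dart, e ≠ ev e.fst ∧ p = X e - X (ev e.fst)} ∪
        {X (ev q)}) :
    RingTheory.Sequence.IsRegular
      (MvPolynomial G.Dart K ⧸ orientedMatroidIdeal G K q) l := by
  classical
  have h0 : Stmt11Aux.II G K q ev ∅ false = orientedMatroidIdeal G K q := by
    unfold Stmt11Aux.II
    simp
  have hmain := Stmt11Aux.main_ind (q := q) hG hev l ∅ false (by simp) hl ?_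
  · rwa [h0] at hmain
  · rw [hset]
    ext p
    simp
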